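/- For n ≥ 2, consider the following convex open sets in R^n: for n+2 ≤ j ≤ 2n+1, let U_j = {x ∈ R^n : 0 < x_k < 1 for all k ≠ j-n-1}; let U_{n+1} = {x ∈ R^n : x_k > 0 for all k, and 2n-1 < x_1+...+x_n < 2n}; and for j ∈ [n], let U_j = U_{n+1} ∩ {x : Σ_{k∈[n]\{j}} x_k > n-1}. Then: (1) the sets U_1,...,U_n cover U_{n+1}; (2) the point with all coordinates equal to 2 - 1/(2n) lies in U_1 ∩ ... ∩ U_{n+1}; and (3) for each j ∈ [n], every point of U_{n+1} ∩ U_{n+1+j} lies in U_k for all k ∈ [n]\{j} but not in U_j. -/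

import Mathlib

open Finset in
/-- The geometric facts from the proof of Lemma 4.7.  In `ℝ^n` (`n ≥ 2`), with
`V j = {x | 0 < x k < 1 for all k ≠ j}` (the petals `U (n+1+j)`),
`W = {x | all x k > 0 and 2n - 1 < Σ x k < 2n}` (the set `U (n+1)`), and
`A j = W ∩ {x | Σ_{k ≠ j} x k > n - 1}` (the sets `U j`, `j ∈ [n]`), we have:
(1) the `A j` cover `W`; (2) the point with all coordinates `2 - 1/(2n)` lies in every `A j`
(and in `W`); (3) every point of `W ∩ V j` lies in `A k` for all `k ≠ j` but not in `A j`. -/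
theorem Cn_realization_geometry (n : ℕ) (hn : 2 ≤ n)
    (V : Fin n → Set (EuclideanSpace ℝ (Fin n)))
    (hV : ∀ j, V j = {x | ∀ k, k ≠ j → 0 < x k ∧ x k < 1})
    (W : Set (EuclideanSpace ℝ (Fin n)))
    (hW : W = {x | (∀ k, 0 < x k) ∧ 2 * (n : ℝ) - 1 < ∑ k, x k ∧ ∑ k, x k < 2 * (n : ℝ)})
    (A : Fin n → Set (EuclideanSpace ℝ (Fin n)))
    (hA : ∀ j, A j = W ∩ {x | (n : ℝ) - 1 < ∑ k ∈ Finset.univ.erase j, x k}) :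
    (W ⊆ ⋃ j, A j) ∧
    ((WithLp.toLp 2 (fun _ => 2 - 1 / (2 * (n : ℝ))) : EuclideanSpace ℝ (Fin n)) ∈ W ∩ ⋂ j, A j) ∧
    (∀ j, ∀ x ∈ W ∩ V j, (∀ k, k ≠ j → x ∈ A k) ∧ x ∉ A j) := by
  have hn' : (2 : ℝ) ≤ (n : ℝ) := by exact_mod_cast hn
  have hnpos : (0 : ℕ) < n := by omega
  have herase : ∀ (x : EuclideanSpace ℝ (Fin n)) (j : Fin n),
      ∑ k ∈ Finset.univ.erase j, x k = (∑ k, x k) - x j := by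
    intro x j
    have := Finset.sum_erase_add Finset.univ x (Finset.mem_univ j)
    linarith
  refine ⟨?_, ?_, ?_⟩
  · -- covering
    intro x hx
    rw [hW] at hx
    obtain ⟨hpos, hlo, hhi⟩ := hx
    obtain ⟨j, -, hj⟩ := Finset.exists_min_image Finset.univ x ⟨⟨0, hnpos⟩, Finset.mem_univ _⟩
    have hcard : (n : ℝ) * x j ≤ ∑ k, x k := by
      calc (n : ℝ) * x j = ∑ _k : Fin n, x j := by
            simp [Finset.sum_const, Finset.card_univ, mul_comm]
        _ ≤ ∑ k, x k := Finset.sum_le_sum (fun k _ => hj k (Finset.mem_univ k))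
    refine Set.mem_iUnion.2 ⟨j, ?_⟩
    rw [hA]
    refine ⟨by rw [hW]; exact ⟨hpos, hlo, hhi⟩, ?_⟩
    rw [Set.mem_setOf_eq, herase]
    nlinarith
  · -- the central point
    have hsum : ∑ _k : Fin n, (2 - 1 / (2 * (n : ℝ))) = (n : ℝ) * (2 - 1 / (2 * (n : ℝ))) := by
      simp [Finset.sum_const, Finset.card_univ, mul_comm]; ring
    have hnne : (2 * (n : ℝ)) ≠ 0 := by positivity
    have hWmem : (WithLp.toLp 2 (fun _ => 2 - 1 / (2 * (n : ℝ))) : EuclideanSpace ℝ (Fin n)) ∈ W := by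
      rw [hW]
      refine ⟨fun k => ?_, ?_, ?_⟩
      · have : 1 / (2 * (n : ℝ)) ≤ 1 / 4 := by
          apply one_div_le_one_div_of_le <;> linarith
        simp only; linarith
      · show 2 * (n : ℝ) - 1 < ∑ k : Fin n, (2 - 1 / (2 * (n : ℝ)))
        rw [hsum]
        have h1 : (n : ℝ) * (1 / (2 * (n : ℝ))) = 1 / 2 := by
          field_simp
        nlinarith
      · show ∑ k : Fin n, (2 - 1 / (2 * (n : ℝ))) < 2 * (n : ℝ)
        rw [hsum]
        have h1 : (n : ℝ) * (1 / (2 * (n : ℝ))) = 1 / 2 := by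
          field_simp
        nlinarith
    refine ⟨hWmem, Set.mem_iInter.2 fun j => ?_⟩
    rw [hA]
    refine ⟨hWmem, ?_⟩
    rw [Set.mem_setOf_eq, herase]
    show (n : ℝ) - 1 < (∑ _k : Fin n, (2 - 1 / (2 * (n : ℝ)))) - (2 - 1 / (2 * (n : ℝ)))
    rw [hsum]
    have h1 : (n : ℝ) * (1 / (2 * (n : ℝ))) = 1 / 2 := by field_simp
    nlinarith
  · -- petals
    intro j x hx
    obtain ⟨hxW, hxV⟩ := hx
    rw [hW] at hxW
    obtain ⟨hpos, hlo, hhi⟩ := hxW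
    rw [hV] at hxV
    have hxWmem : x ∈ W := by rw [hW]; exact ⟨hpos, hlo, hhi⟩
    have hsmall : ∑ k ∈ Finset.univ.erase j, x k < (n : ℝ) - 1 := by
      have hcard : (Finset.univ.erase j).card = n - 1 := by
        rw [Finset.card_erase_of_mem (Finset.mem_univ j), Finset.card_univ, Fintype.card_fin]
      have : ∑ k ∈ Finset.univ.erase j, x k < ∑ _k ∈ Finset.univ.erase j, (1 : ℝ) := by
        apply Finset.sum_lt_sum_of_nonempty
        · rw [← Finset.card_pos, hcard]; omega
        · intro k hk
          exact (hxV k (Finset.ne_of_mem_erase hk)).2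
      rw [Finset.sum_const, hcard, nsmul_eq_mul] at this
      have hc : ((n - 1 : ℕ) : ℝ) = (n : ℝ) - 1 := by
        push_cast [Nat.cast_sub (by omega : 1 ≤ n)]; ring
      rw [hc] at this
      linarith
    constructor
    · intro k hkj
      rw [hA]
      refine ⟨hxWmem, ?_⟩
      rw [Set.mem_setOf_eq, herase]
      have hxj : (n : ℝ) < x j := by
        have := herase x j
        linarith
      have hk1 : x k < 1 := (hxV k hkj).2
      linarith
    · rw [hA]
      rintro ⟨-, h⟩
      rw [Set.mem_setOf_eq] at h
      linarith
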